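/- Let ρ be a Borel probability measure on ℝ with finite second moment and let N ≥ 1. Then there exists a unique family of Borel probability measures ρ₁,…,ρ_N on ℝ, each with finite second moment, such that: (i) ρ = (1/N)∑_{i=1}^N ρ_i; (ii) for all i < j, every point of the support of ρ_i is ≤ every point of the support of ρ_j; and (iii) for every X = (x₁,…,x_N) ∈ ℝ^N with x₁ < … < x_N, the monotone transport plan between μ_X := (1/N)∑_{i=1}^N δ_{x_i} and ρ, namely γ := (F_{μ_X}^{-1}, F_ρ^{-1})_# Leb_{[0,1]}, equals (1/N)∑_{i=1}^N δ_{x_i} ⊗ ρ_i. -/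

import Mathlib

open MeasureTheory Set
open scoped ENNReal

noncomputable section

/-- Quantile function `F_ν⁻¹(t) = inf {s | F_ν(s) ≥ t}` of a measure on `ℝ`. -/
def quantile (ν : Measure ℝ) (t : ℝ) : ℝ :=
  sInf {s : ℝ | t ≤ (ν (Iic s)).toReal}

/-- Monotone (quadratically optimal) transport plan
`γ = (F_{ν₁}⁻¹, F_{ν₂}⁻¹)_# Leb_{[0,1]}` between two measures on `ℝ`. -/
def monoPlan (ν₁ ν₂ : Measure ℝ) : Measure (ℝ × ℝ) :=
  Measure.map (fun t => (quantile ν₁ t, quantile ν₂ t)) (volume.restrict (Icc (0:ℝ) 1))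

/-- Uniform empirical measure of a point cloud in `ℝ`. -/
def empMeasure1 {N : ℕ} (X : Fin N → ℝ) : Measure ℝ :=
  (N : ℝ≥0∞)⁻¹ • ∑ i : Fin N, Measure.dirac (X i)

/-- Support of a measure on `ℝ`. -/
def msupport (μ : Measure ℝ) : Set ℝ := {x | ∀ ε > 0, 0 < μ (Metric.ball x ε)}

namespace Stmt10

/-! ### Quantile basics -/

variable {ρ : Measure ℝ} [IsProbabilityMeasure ρ]

lemma cdf_eq (s : ℝ) : ProbabilityTheory.cdf ρ s = (ρ (Iic s)).toReal :=
  ProbabilityTheory.cdf_eq_real (μ := ρ) s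

lemma qset_eq (t : ℝ) :
    {s : ℝ | t ≤ (ρ (Iic s)).toReal} = {s : ℝ | t ≤ ProbabilityTheory.cdf ρ s} := by
  simp [cdf_eq]

lemma qset_nonempty {t : ℝ} (ht1 : t < 1) :
    {s : ℝ | t ≤ (ρ (Iic s)).toReal}.Nonempty := by
  rw [qset_eq]
  exact ((ProbabilityTheory.tendsto_cdf_atTop ρ).eventually (eventually_ge_nhds ht1)).exists

lemma qset_bddBelow {t : ℝ} (ht0 : 0 < t) :
    BddBelow {s : ℝ | t ≤ (ρ (Iic s)).toReal} := by
  rw [qset_eq]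
  obtain ⟨s₀, hs₀⟩ :=
    ((ProbabilityTheory.tendsto_cdf_atBot ρ).eventually (eventually_lt_nhds ht0)).exists
  refine ⟨s₀, fun s hs => ?_⟩
  by_contra h
  push_neg at h
  exact absurd (le_trans hs ((ProbabilityTheory.cdf ρ).mono h.le)) (not_le.mpr hs₀)

lemma quantile_le_iff {t s : ℝ} (ht0 : 0 < t) (ht1 : t < 1) :
    quantile ρ t ≤ s ↔ t ≤ (ρ (Iic s)).toReal := by
  rw [← cdf_eq]
  constructor
  · intro h
    have key : ∀ ε > 0, t ≤ ProbabilityTheory.cdf ρ (s + ε) := by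
      intro ε hε
      have hlt : sInf {s : ℝ | t ≤ (ρ (Iic s)).toReal} < s + ε := lt_of_le_of_lt h (by linarith)
      obtain ⟨a, ha, halt⟩ :=
        (csInf_lt_iff (qset_bddBelow ht0) (qset_nonempty ht1)).mp hlt
      rw [qset_eq] at ha
      exact le_trans ha ((ProbabilityTheory.cdf ρ).mono halt.le)
    have htend : Filter.Tendsto (ProbabilityTheory.cdf ρ) (nhdsWithin s (Ioi s))
        (nhds (ProbabilityTheory.cdf ρ s)) :=
      ((ProbabilityTheory.cdf ρ).right_continuous s).tendsto.mono_left
        (nhdsWithin_mono s Ioi_subset_Ici_self)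
    refine ge_of_tendsto htend ?_
    filter_upwards [self_mem_nhdsWithin] with x hx
    have := key (x - s) (by simpa using hx)
    simpa using this
  · intro h
    refine csInf_le (qset_bddBelow ht0) ?_
    rw [qset_eq]
    exact h

lemma quantile_monotoneOn : MonotoneOn (quantile ρ) (Ioo (0:ℝ) 1) := by
  intro t ht t' ht' htt'
  exact csInf_le_csInf (qset_bddBelow ht.1) (qset_nonempty ht'.2)
    (fun s hs => le_trans htt' hs)

lemma quantile_aemeasurable {a b : ℝ} (ha : 0 ≤ a) (hb : b ≤ 1) :
    AEMeasurable (quantile ρ) (volume.restrict (Ioc a b)) := by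
  rw [← Measure.restrict_congr_set Ioo_ae_eq_Ioc]
  exact aemeasurable_restrict_of_monotoneOn measurableSet_Ioo
    (quantile_monotoneOn.mono (Ioo_subset_Ioo ha hb))

lemma map_quantile_restrict_Iic {a b : ℝ} (ha : 0 ≤ a) (hb : b ≤ 1) (s : ℝ) :
    Measure.map (quantile ρ) (volume.restrict (Ioc a b)) (Iic s)
      = ENNReal.ofReal (min b ((ρ (Iic s)).toReal) - a) := by
  rw [Measure.map_apply_of_aemeasurable (quantile_aemeasurable ha hb) measurableSet_Iic,
    ← Measure.restrict_congr_set Ioo_ae_eq_Ioc,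
    Measure.restrict_apply' measurableSet_Ioo]
  set c := (ρ (Iic s)).toReal with hc
  have hiff : ∀ t, a < t → t < b →
      (quantile ρ t ≤ s ↔ t ≤ c) := fun t hta htb =>
    quantile_le_iff (lt_of_le_of_lt ha hta) (lt_of_lt_of_le htb hb)
  rcases le_or_gt b c with hbc | hbc
  · have hset : quantile ρ ⁻¹' Iic s ∩ Ioo a b = Ioo a b := by
      ext t
      simp only [mem_inter_iff, mem_preimage, mem_Iic, mem_Ioo, and_iff_right_iff_imp]
      rintro ⟨hta, htb⟩
      exact (hiff t hta htb).mpr (le_trans htb.le hbc)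
    rw [hset, Real.volume_Ioo, min_eq_left hbc]
  · have hset : quantile ρ ⁻¹' Iic s ∩ Ioo a b = Ioc a c := by
      ext t
      simp only [mem_inter_iff, mem_preimage, mem_Iic, mem_Ioo, mem_Ioc]
      constructor
      · rintro ⟨hq, hta, htb⟩
        exact ⟨hta, (hiff t hta htb).mp hq⟩
      · rintro ⟨hta, htc⟩
        have htb : t < b := lt_of_le_of_lt htc hbc
        exact ⟨(hiff t hta htb).mpr htc, hta, htb⟩
    rw [hset, Real.volume_Ioc, min_eq_right hbc.le]

lemma map_quantile_Ioc01 :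
    Measure.map (quantile ρ) (volume.restrict (Ioc (0:ℝ) 1)) = ρ := by
  have hfin : IsProbabilityMeasure
      (Measure.map (quantile ρ) (volume.restrict (Ioc (0:ℝ) 1))) := by
    constructor
    rw [Measure.map_apply_of_aemeasurable (quantile_aemeasurable le_rfl le_rfl)
      MeasurableSet.univ]
    simp [Real.volume_Ioc]
  refine Measure.ext_of_Iic _ _ fun s => ?_
  rw [map_quantile_restrict_Iic le_rfl le_rfl]
  have hle : (ρ (Iic s)).toReal ≤ 1 := by
    simpa using ENNReal.toReal_mono ENNReal.one_ne_top prob_le_one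
  rw [min_eq_right hle, sub_zero, ENNReal.ofReal_toReal (measure_ne_top _ _)]

/-! ### The grid intervals -/

/-- The `i`-th subinterval `((i/N, (i+1)/N]` of `(0,1]`. -/
def JN (N : ℕ) (i : Fin N) : Set ℝ := Ioc (((i:ℕ):ℝ)/N) ((((i:ℕ):ℝ)+1)/N)

lemma Ii_subset {N : ℕ} (i : Fin N) : JN N i ⊆ Ioc (0:ℝ) 1 := by
  have hN : (0:ℝ) < N := by exact_mod_cast i.pos
  refine Ioc_subset_Ioc (by positivity) ?_
  rw [div_le_one hN]
  have : (i:ℕ) + 1 ≤ N := i.isLt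
  exact_mod_cast this

lemma pairwise_disjoint_Ii {N : ℕ} :
    Pairwise (Function.onFun Disjoint (JN N)) := by
  have key : ∀ i j : Fin N, i < j → Disjoint (JN N i) (JN N j) := by
    intro i j hij
    have hN : (0:ℝ) < N := by exact_mod_cast i.pos
    refine Set.Ioc_disjoint_Ioc.mpr ?_
    have h1 : ((i:ℕ):ℝ) + 1 ≤ ((j:ℕ):ℝ) := by
      have : (i:ℕ) + 1 ≤ (j:ℕ) := hij
      exact_mod_cast this
    refine le_trans (min_le_left _ _) (le_trans ?_ (le_max_right _ _))
    gcongr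
  intro i j hij
  rcases lt_or_gt_of_ne hij with h | h
  · exact key i j h
  · exact (key j i h).symm

lemma iUnion_Ii {N : ℕ} (hN : 1 ≤ N) :
    (⋃ i : Fin N, JN N i) = Ioc (0:ℝ) 1 := by
  have hN0 : (0:ℝ) < N := by exact_mod_cast hN
  apply Subset.antisymm
  · exact iUnion_subset fun i => Ii_subset i
  · intro t ht
    set k : ℤ := ⌈t * N⌉ with hk
    have hk1 : 1 ≤ k := Int.ceil_pos.mpr (by nlinarith [ht.1])
    have hkN : k ≤ N := Int.ceil_le.mpr (by push_cast; nlinarith [ht.2])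
    have h1 : (1:ℕ) ≤ k.toNat := by omega
    have h2 : ((k.toNat : ℕ) : ℝ) = (k : ℝ) := by
      exact_mod_cast congrArg (Int.cast : ℤ → ℝ) (Int.toNat_of_nonneg (by omega))
    have hcast : ((k.toNat - 1 : ℕ) : ℝ) = (k : ℝ) - 1 := by
      rw [Nat.cast_sub h1, h2]; norm_num
    refine mem_iUnion.mpr ⟨⟨k.toNat - 1, by omega⟩, ?_, ?_⟩
    · show ((k.toNat - 1 : ℕ) : ℝ) / N < t
      rw [hcast, div_lt_iff₀ hN0]
      have := Int.lt_ceil.mp (show k - 1 < ⌈t * N⌉ by omega)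
      push_cast at this
      linarith
    · show t ≤ (((k.toNat - 1 : ℕ) : ℝ) + 1) / N
      rw [hcast, le_div_iff₀ hN0]
      have := Int.le_ceil (t * N)
      push_cast at this ⊢
      linarith

lemma restrict_sum {N : ℕ} (hN : 1 ≤ N) :
    volume.restrict (Ioc (0:ℝ) 1)
      = Measure.sum (fun i : Fin N => volume.restrict (JN N i)) := by
  rw [← iUnion_Ii hN,
    Measure.restrict_iUnion pairwise_disjoint_Ii (fun i => measurableSet_Ioc)]

/-! ### Empirical measures -/

open Classical in
lemma empMeasure1_apply {N : ℕ} (X : Fin N → ℝ) {s : Set ℝ} (hs : MeasurableSet s) :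
    empMeasure1 X s = (N : ℝ≥0∞)⁻¹ * (Finset.univ.filter (fun j => X j ∈ s)).card := by
  rw [empMeasure1, Measure.smul_apply, Measure.finset_sum_apply, smul_eq_mul]
  congr 1
  rw [Finset.card_filter]
  push_cast
  refine Finset.sum_congr rfl fun j _ => ?_
  rw [Measure.dirac_apply' _ hs]
  by_cases h : X j ∈ s <;> simp [h]

open Classical in
lemma empMeasure1_toReal {N : ℕ} (X : Fin N → ℝ) (s : ℝ) :
    (empMeasure1 X (Iic s)).toReal
      = ((Finset.univ.filter (fun j => X j ≤ s)).card : ℝ) / N := by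
  rw [empMeasure1_apply X measurableSet_Iic]
  rw [ENNReal.toReal_mul, ENNReal.toReal_inv, ENNReal.toReal_natCast,
    ENNReal.toReal_natCast]
  simp only [mem_Iic]
  ring

lemma isProb_emp {N : ℕ} (hN : 1 ≤ N) (X : Fin N → ℝ) :
    IsProbabilityMeasure (empMeasure1 X) := by
  constructor
  rw [empMeasure1_apply X MeasurableSet.univ]
  simp only [mem_univ, Finset.filter_true, Finset.card_univ, Fintype.card_fin]
  exact ENNReal.inv_mul_cancel (Nat.cast_ne_zero.mpr (by omega))
    (ENNReal.natCast_ne_top N)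

open Classical in
lemma quantile_emp {N : ℕ} (X : Fin N → ℝ) (hX : StrictMono X) (i : Fin N) {t : ℝ}
    (ht : t ∈ JN N i) :
    quantile (empMeasure1 X) t = X i := by
  have hN0 : (0:ℝ) < N := by exact_mod_cast i.pos
  have hset : {s : ℝ | t ≤ (empMeasure1 X (Iic s)).toReal} = Ici (X i) := by
    ext s
    rw [mem_setOf_eq, empMeasure1_toReal X s, mem_Ici]
    constructor
    · intro h
      by_contra hs
      push_neg at hs
      have hsub : Finset.univ.filter (fun j => X j ≤ s) ⊆ Finset.Iio i := by
        intro j hj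
        simp only [Finset.mem_filter] at hj
        exact Finset.mem_Iio.mpr (hX.lt_iff_lt.mp (lt_of_le_of_lt hj.2 hs))
      have hcard : ((Finset.univ.filter (fun j => X j ≤ s)).card : ℝ) ≤ (i:ℕ) := by
        have := Finset.card_le_card hsub
        rw [Fin.card_Iio] at this
        exact_mod_cast this
      have htN : ((i:ℕ):ℝ) < t * N := (div_lt_iff₀ hN0).mp ht.1
      have h2 : t * N ≤ ((Finset.univ.filter (fun j => X j ≤ s)).card : ℝ) :=
        (le_div_iff₀ hN0).mp h
      linarith
    · intro h
      have hsub : Finset.Iic i ⊆ Finset.univ.filter (fun j => X j ≤ s) := by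
        intro j hj
        simp only [Finset.mem_filter, Finset.mem_univ, true_and]
        exact le_trans (hX.monotone (Finset.mem_Iic.mp hj)) h
      have hcard : ((i:ℕ):ℝ) + 1 ≤ ((Finset.univ.filter (fun j => X j ≤ s)).card : ℝ) := by
        have := Finset.card_le_card hsub
        rw [Fin.card_Iic] at this
        exact_mod_cast this
      rw [le_div_iff₀ hN0]
      calc t * N ≤ (((i:ℕ):ℝ) + 1) / N * N :=
            mul_le_mul_of_nonneg_right ht.2 hN0.le
        _ = ((i:ℕ):ℝ) + 1 := by field_simp
        _ ≤ _ := hcard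
  rw [quantile, hset, csInf_Ici]

/-! ### The pieces -/

/-- The `i`-th piece of the decomposition of `ρ`. -/
def piece (ρ : Measure ℝ) (N : ℕ) (i : Fin N) : Measure ℝ :=
  Measure.map (quantile ρ) (volume.restrict (JN N i))

instance sfinite_piece {N : ℕ} (i : Fin N) : SFinite (piece ρ N i) := by
  unfold piece; infer_instance

lemma quantile_aemeasurable_J {N : ℕ} (i : Fin N) :
    AEMeasurable (quantile ρ) (volume.restrict (JN N i)) := by
  have hN : (0:ℝ) < N := by exact_mod_cast i.pos
  refine quantile_aemeasurable (by positivity) ?_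
  rw [div_le_one hN]
  have : (i:ℕ) + 1 ≤ N := i.isLt
  exact_mod_cast this

lemma piece_univ {N : ℕ} (i : Fin N) : piece ρ N i univ = (N : ℝ≥0∞)⁻¹ := by
  have hN : (0:ℝ) < N := by exact_mod_cast i.pos
  rw [piece, Measure.map_apply_of_aemeasurable (quantile_aemeasurable_J i)
    MeasurableSet.univ, preimage_univ, Measure.restrict_apply_univ, JN,
    Real.volume_Ioc]
  have h1 : (((i:ℕ):ℝ)+1)/N - ((i:ℕ):ℝ)/N = (N:ℝ)⁻¹ := by
    field_simp
    ring
  rw [h1, ENNReal.ofReal_inv_of_pos hN, ENNReal.ofReal_natCast]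

lemma prob_scaled_piece {N : ℕ} (i : Fin N) :
    IsProbabilityMeasure ((N : ℝ≥0∞) • piece ρ N i) := by
  constructor
  rw [Measure.smul_apply, piece_univ, smul_eq_mul]
  exact ENNReal.mul_inv_cancel (Nat.cast_ne_zero.mpr i.pos.ne') (ENNReal.natCast_ne_top N)

lemma map_pieces {N : ℕ} (hN : 1 ≤ N) :
    ρ = ∑ i : Fin N, piece ρ N i := by
  conv_lhs => rw [← map_quantile_Ioc01 (ρ := ρ)]
  rw [restrict_sum hN,
    Measure.map_sum (by rw [← restrict_sum hN]; exact quantile_aemeasurable le_rfl le_rfl),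
    Measure.sum_fintype]
  rfl

lemma integrable_quantile_sq (hmom : Integrable (fun x => x ^ 2) ρ) :
    Integrable (fun t => (quantile ρ t) ^ 2) (volume.restrict (Ioc (0:ℝ) 1)) := by
  have h1 : Integrable (fun x => x ^ 2)
      (Measure.map (quantile ρ) (volume.restrict (Ioc (0:ℝ) 1))) := by
    rw [map_quantile_Ioc01]; exact hmom
  exact (integrable_map_measure ((continuous_pow 2).aestronglyMeasurable)
    (quantile_aemeasurable le_rfl le_rfl)).mp h1

lemma integrable_piece {N : ℕ} (i : Fin N) (hmom : Integrable (fun x => x ^ 2) ρ) :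
    Integrable (fun x => x ^ 2) ((N : ℝ≥0∞) • piece ρ N i) := by
  refine Integrable.smul_measure ?_ (ENNReal.natCast_ne_top N)
  rw [piece, integrable_map_measure ((continuous_pow 2).aestronglyMeasurable)
    (quantile_aemeasurable_J i)]
  exact (integrable_quantile_sq hmom).mono_measure
    (Measure.restrict_mono (Ii_subset i) le_rfl)

/-! ### Supports -/

lemma exists_near {N : ℕ} (i : Fin N) {x ε : ℝ} (hε : 0 < ε)
    (hx : 0 < ((N : ℝ≥0∞) • piece ρ N i) (Metric.ball x ε)) :
    ∃ t ∈ Ioo (((i:ℕ):ℝ)/N) ((((i:ℕ):ℝ)+1)/N), |quantile ρ t - x| < ε := by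
  rw [Measure.smul_apply] at hx
  have h1 : piece ρ N i (Metric.ball x ε) ≠ 0 := by
    intro h
    rw [h] at hx
    simp at hx
  rw [piece, Measure.map_apply_of_aemeasurable (quantile_aemeasurable_J i)
    measurableSet_ball, JN, ← Measure.restrict_congr_set Ioo_ae_eq_Ioc,
    Measure.restrict_apply' measurableSet_Ioo] at h1
  obtain ⟨t, ht1, ht2⟩ := nonempty_of_measure_ne_zero h1
  refine ⟨t, ht2, ?_⟩
  have := Metric.mem_ball.mp ht1
  rwa [Real.dist_eq] at this

lemma support_ordered {N : ℕ} (i j : Fin N) (hij : i < j) {x y : ℝ}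
    (hx : x ∈ msupport ((N : ℝ≥0∞) • piece ρ N i))
    (hy : y ∈ msupport ((N : ℝ≥0∞) • piece ρ N j)) : x ≤ y := by
  have hN : (0:ℝ) < N := by exact_mod_cast i.pos
  refine le_of_forall_pos_le_add fun ε hε => ?_
  obtain ⟨t, ht, hqt⟩ := exists_near i (half_pos hε) (hx (ε/2) (half_pos hε))
  obtain ⟨t', ht', hqt'⟩ := exists_near j (half_pos hε) (hy (ε/2) (half_pos hε))
  have hsub : ∀ k : Fin N, Ioo (((k:ℕ):ℝ)/N) ((((k:ℕ):ℝ)+1)/N) ⊆ Ioo (0:ℝ) 1 := by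
    intro k
    refine Ioo_subset_Ioo (by positivity) ?_
    rw [div_le_one hN]
    have : (k:ℕ) + 1 ≤ N := k.isLt
    exact_mod_cast this
  have htt' : t ≤ t' := by
    have h1 : ((i:ℕ):ℝ) + 1 ≤ ((j:ℕ):ℝ) := by
      have : (i:ℕ) + 1 ≤ (j:ℕ) := hij
      exact_mod_cast this
    have h2 : (((i:ℕ):ℝ)+1)/N ≤ ((j:ℕ):ℝ)/N := by gcongr
    linarith [ht.2, ht'.1]
  have hmono := quantile_monotoneOn (ρ := ρ) (hsub i ht) (hsub j ht') htt'
  have h1 := abs_lt.mp hqt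
  have h2 := abs_lt.mp hqt'
  linarith

/-! ### The transport plan -/

lemma monoPlan_eq {N : ℕ} (hN : 1 ≤ N) (X : Fin N → ℝ) (hX : StrictMono X) :
    monoPlan (empMeasure1 X) ρ
      = ∑ i : Fin N, (Measure.dirac (X i)).prod (piece ρ N i) := by
  haveI := isProb_emp hN X
  have hpair : AEMeasurable (fun t => (quantile (empMeasure1 X) t, quantile ρ t))
      (volume.restrict (Ioc (0:ℝ) 1)) :=
    (quantile_aemeasurable (ρ := empMeasure1 X) le_rfl le_rfl).prodMk
      (quantile_aemeasurable (ρ := ρ) le_rfl le_rfl)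
  rw [monoPlan, ← Measure.restrict_congr_set Ioc_ae_eq_Icc, restrict_sum hN,
    Measure.map_sum (by rw [← restrict_sum hN]; exact hpair), Measure.sum_fintype]
  refine Finset.sum_congr rfl fun i _ => ?_
  have hcongr : Measure.map (fun t => (quantile (empMeasure1 X) t, quantile ρ t))
      (volume.restrict (JN N i))
      = Measure.map (fun t => (X i, quantile ρ t)) (volume.restrict (JN N i)) := by
    refine Measure.map_congr ?_
    refine (ae_restrict_iff' measurableSet_Ioc).mpr (Filter.Eventually.of_forall fun t ht => ?_)
    simp only [quantile_emp X hX i ht]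
  rw [hcongr, Measure.dirac_prod, piece,
    AEMeasurable.map_map_of_aemeasurable measurable_prodMk_left.aemeasurable
      (quantile_aemeasurable_J i)]
  rfl

end Stmt10

open Stmt10 in
/-- Decomposition of a measure on `ℝ` into `N` ordered pieces realizing all the monotone
transport plans from `N`-point clouds. -/
theorem statement10 (N : ℕ) (hN : 1 ≤ N) (ρ : Measure ℝ) [IsProbabilityMeasure ρ]
    (hmom : Integrable (fun x => x ^ 2) ρ) :
    ∃! ρs : Fin N → Measure ℝ,
      (∀ i, IsProbabilityMeasure (ρs i)) ∧
      (∀ i, Integrable (fun x => x ^ 2) (ρs i)) ∧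
      ρ = (N : ℝ≥0∞)⁻¹ • ∑ i : Fin N, ρs i ∧
      (∀ i j : Fin N, i < j →
        ∀ x ∈ msupport (ρs i), ∀ y ∈ msupport (ρs j), x ≤ y) ∧
      (∀ X : Fin N → ℝ, StrictMono X →
        monoPlan (empMeasure1 X) ρ =
          (N : ℝ≥0∞)⁻¹ • ∑ i : Fin N, (Measure.dirac (X i)).prod (ρs i)) := by
  classical
  have hN0 : (N : ℝ≥0∞) ≠ 0 := Nat.cast_ne_zero.mpr (by omega)
  have hNtop : (N : ℝ≥0∞) ≠ ⊤ := ENNReal.natCast_ne_top N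
  set w : Fin N → Measure ℝ := fun i => (N : ℝ≥0∞) • piece ρ N i with hw
  have hw5 : ∀ X : Fin N → ℝ, StrictMono X →
      monoPlan (empMeasure1 X) ρ =
        (N : ℝ≥0∞)⁻¹ • ∑ i : Fin N, (Measure.dirac (X i)).prod (w i) := by
    intro X hX
    rw [monoPlan_eq hN X hX]
    have hterm : ∀ i : Fin N, (Measure.dirac (X i)).prod (w i)
        = (N : ℝ≥0∞) • (Measure.dirac (X i)).prod (piece ρ N i) := by
      intro i
      rw [hw, Measure.dirac_prod, Measure.dirac_prod, Measure.map_smul]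
    simp_rw [hterm]
    rw [← Finset.smul_sum, smul_smul, ENNReal.inv_mul_cancel hN0 hNtop, one_smul]
  refine ⟨w, ⟨fun i => prob_scaled_piece i, fun i => integrable_piece i hmom, ?_, ?_, hw5⟩, ?_⟩
  · simp_rw [hw, ← Finset.smul_sum, smul_smul, ENNReal.inv_mul_cancel hN0 hNtop, one_smul]
    exact map_pieces hN
  · intro i j hij x hx y hy
    exact support_ordered i j hij hx hy
  · rintro σ ⟨hσ1, -, -, -, hσ5⟩
    have hwprob : ∀ i, IsProbabilityMeasure (w i) := fun i => prob_scaled_piece i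
    set X : Fin N → ℝ := fun i => ((i : ℕ) : ℝ) with hX
    have hXmono : StrictMono X := fun i j hij => by
      simp only [hX]
      exact Nat.cast_lt.mpr hij
    have heq := (hσ5 X hXmono).symm.trans (hw5 X hXmono)
    funext i
    refine Measure.ext fun A hA => ?_
    have key : ∀ τ : Fin N → Measure ℝ, (∀ j, IsProbabilityMeasure (τ j)) →
        ((N : ℝ≥0∞)⁻¹ • ∑ j : Fin N, (Measure.dirac (X j)).prod (τ j)) ({X i} ×ˢ A)
          = (N : ℝ≥0∞)⁻¹ * τ i A := by
      intro τ hτ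
      rw [Measure.smul_apply, Measure.finset_sum_apply, smul_eq_mul]
      congr 1
      have hterm : ∀ j : Fin N, (Measure.dirac (X j)).prod (τ j) ({X i} ×ˢ A)
          = Measure.dirac (X j) {X i} * τ j A := by
        intro j
        haveI := hτ j
        exact Measure.prod_prod _ _
      rw [Fintype.sum_eq_single i ?_]
      · rw [hterm i, Measure.dirac_apply' _ (measurableSet_singleton _),
          indicator_of_mem (mem_singleton _), Pi.one_apply, one_mul]
      · intro j hj
        rw [hterm j, Measure.dirac_apply' _ (measurableSet_singleton _),
          indicator_of_notMem (by simpa using hXmono.injective.ne hj), zero_mul]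
    have happ := congrArg (fun m : Measure (ℝ × ℝ) => m ({X i} ×ˢ A)) heq
    rw [key σ hσ1, key w hwprob] at happ
    exact (ENNReal.mul_right_inj (ENNReal.inv_ne_zero.mpr hNtop)
      (ENNReal.inv_ne_top.mpr hN0)).mp happ
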